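/- Let 1 ≤ p < ∞ and let B denote the backward shift on the complex Banach space ℓ^p(ℕ) of p-summable complex sequences, defined by B(x₀,x₁,x₂,…) = (x₁,x₂,x₃,…). For λ ∈ ℂ, the operator λB is hypercyclic on ℓ^p(ℕ) if and only if |λ| > 1. -/

import Mathlib

open Filter Topology ENNReal

set_option synthInstance.maxHeartbeats 1000000
set_option maxHeartbeats 1000000

/-- A continuous linear operator `T` is hypercyclic if some vector has dense orbit. -/
def Hypercyclic {𝕜 X : Type*} [Semiring 𝕜] [TopologicalSpace X] [AddCommMonoid X]
    [Module 𝕜 X] (T : X →L[𝕜] X) : Prop :=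
  ∃ x : X, Dense (Set.range fun n : ℕ => (T ^ n) x)

section Aux

set_option linter.unusedSectionVars false

variable (p : ℝ≥0∞) [Fact (1 ≤ p)] (hp : p ≠ ∞)
  (B : lp (fun _ : ℕ => ℂ) p →L[ℂ] lp (fun _ : ℕ => ℂ) p)
  (hB : ∀ (x : lp (fun _ : ℕ => ℂ) p) (n : ℕ), (B x) n = x (n + 1))

include hp hB

lemma aux_toReal_pos : 0 < p.toReal :=
  ENNReal.toReal_pos (zero_lt_one.trans_le (Fact.out : 1 ≤ p)).ne' hp

lemma aux_norm_B_le (x : lp (fun _ : ℕ => ℂ) p) : ‖B x‖ ≤ ‖x‖ := by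
  have hq : 0 < p.toReal := aux_toReal_pos p hp B hB
  rw [← Real.rpow_le_rpow_iff (norm_nonneg _) (norm_nonneg _) hq,
    lp.norm_rpow_eq_tsum hq, lp.norm_rpow_eq_tsum hq]
  have hsum : Summable fun n : ℕ => ‖x n‖ ^ p.toReal := (lp.memℓp x).summable hq
  have : ∀ n : ℕ, ‖(B x) n‖ ^ p.toReal = ‖x (n+1)‖ ^ p.toReal := fun n => by rw [hB]
  rw [tsum_congr this]
  exact ((summable_nat_add_iff 1).2 hsum).tsum_le_tsum_of_inj (fun n => n + 1) (fun a b h => by simpa using h)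
    (fun c _ => Real.rpow_nonneg (norm_nonneg _) _)
    (fun n => le_refl _) hsum

lemma aux_single_sub (n : ℕ) (a b : ℂ) :
    (lp.single p n a : lp (fun _ : ℕ => ℂ) p) - lp.single p n b = lp.single p n (a - b) := by
  apply lp.ext
  funext j
  by_cases h : j = n
  · subst h; simp [lp.single_apply_self]
  · simp [lp.single_apply_ne p n _ h]

lemma aux_B_single_succ (n : ℕ) (a : ℂ) :
    B (lp.single p (n+1) a) = lp.single p n a := by
  apply lp.ext
  funext j
  rw [hB]
  by_cases h : j = n
  · subst h; simp [lp.single_apply_self]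
  · rw [lp.single_apply_ne p n _ h, lp.single_apply_ne p (n+1) _ (by omega)]

lemma aux_B_single_zero (a : ℂ) : B (lp.single p 0 a) = 0 := by
  apply lp.ext
  funext j
  rw [hB, lp.single_apply_ne p 0 _ (by omega)]
  rfl

lemma aux_Bpow_single (N n : ℕ) (a : ℂ) :
    (B ^ N) (lp.single p (n + N) a) = lp.single p n a := by
  induction N with
  | zero => simp
  | succ N ih =>
      have : n + (N+1) = (n + N) + 1 := by ring
      rw [pow_succ, ContinuousLinearMap.mul_apply, this, aux_B_single_succ p hp B hB, ih]

lemma aux_Bpow_single_zero (N : ℕ) : ∀ n < N, ∀ a : ℂ,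
    (B ^ N) (lp.single p n a) = 0 := by
  induction N with
  | zero => omega
  | succ N ih =>
      intro n hn a
      rw [pow_succ, ContinuousLinearMap.mul_apply]
      match n with
      | 0 => rw [aux_B_single_zero p hp B hB, map_zero]
      | m + 1 => rw [aux_B_single_succ p hp B hB, ih m (by omega)]

lemma aux_approx (f : lp (fun _ : ℕ => ℂ) p) {ε : ℝ} (hε : 0 < ε) :
    ∃ m : ℕ, ‖f - ∑ i : Fin m, lp.single p (i : ℕ) (f i)‖ < ε := by
  have h := (lp.hasSum_single hp f).tendsto_sum_nat
  rw [Metric.tendsto_atTop] at h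
  obtain ⟨m, hm⟩ := h ε hε
  refine ⟨m, ?_⟩
  have := hm m le_rfl
  rw [dist_eq_norm] at this
  rw [← norm_neg]
  simpa [Finset.sum_range, neg_sub] using this

lemma aux_norm_single (i : ℕ) (a : ℂ) : ‖(lp.single p i a : lp (fun _ : ℕ => ℂ) p)‖ = ‖a‖ :=
  lp.norm_single (E := fun _ : ℕ => ℂ) (zero_lt_one.trans_le (Fact.out : 1 ≤ p)) i a

lemma aux_countable_dense :
    ∃ D : Set (lp (fun _ : ℕ => ℂ) p), D.Countable ∧ Dense D := by
  obtain ⟨C, hCc, hCd⟩ := TopologicalSpace.exists_countable_dense ℂ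
  refine ⟨⋃ m : ℕ, (fun c : Fin m → ℂ => ∑ i : Fin m, lp.single p (i : ℕ) (c i)) ''
      {c | ∀ i, c i ∈ C}, ?_, ?_⟩
  · exact Set.countable_iUnion fun m => (Set.countable_pi fun _ => hCc).image _
  · rw [Metric.dense_iff]
    intro x ε hε
    obtain ⟨m, hm⟩ := aux_approx p hp B hB x (half_pos hε)
    set δ : ℝ := ε / (2 * (m + 1)) with hδdef
    have hδ : 0 < δ := by positivity
    have hchoose : ∀ i : Fin m, ∃ ci, ci ∈ C ∧ dist ((x : ℕ → ℂ) (i : ℕ)) ci < δ := by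
      intro i
      obtain ⟨ci, hci1, hci2⟩ := Metric.dense_iff.1 hCd ((x : ℕ → ℂ) (i : ℕ)) δ hδ
      exact ⟨ci, hci2, by rw [dist_comm]; exact Metric.mem_ball.1 hci1⟩
    choose c hc1 hc2 using hchoose
    refine ⟨(∑ i : Fin m, lp.single p (i : ℕ) (c i) : lp (fun _ : ℕ => ℂ) p), ?_, ?_⟩
    · rw [Metric.mem_ball, dist_comm, dist_eq_norm]
      have key : ‖(∑ i : Fin m, lp.single p (i : ℕ) ((x : ℕ → ℂ) (i : ℕ)) : lp (fun _ : ℕ => ℂ) p) -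
          ∑ i : Fin m, lp.single p (i : ℕ) (c i)‖ ≤ (m : ℝ) * δ := by
        rw [← Finset.sum_sub_distrib]
        refine (norm_sum_le _ _).trans ?_
        have hterm : ∀ i : Fin m,
            ‖(lp.single p (i : ℕ) ((x : ℕ → ℂ) (i : ℕ)) : lp (fun _ : ℕ => ℂ) p) -
              lp.single p (i : ℕ) (c i)‖ ≤ δ := by
          intro i
          rw [aux_single_sub p hp B hB, aux_norm_single p hp B hB]
          rw [← dist_eq_norm]
          exact (hc2 i).le
        calc ∑ i : Fin m, ‖(lp.single p (i : ℕ) ((x : ℕ → ℂ) (i : ℕ)) : lp (fun _ : ℕ => ℂ) p) -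
              lp.single p (i : ℕ) (c i)‖ ≤ ∑ _i : Fin m, δ :=
                Finset.sum_le_sum fun i _ => hterm i
          _ = (m : ℝ) * δ := by simp [mul_comm]
      have hmδ : (m : ℝ) * δ < ε / 2 := by
        rw [hδdef, mul_div_assoc']
        rw [div_lt_div_iff₀ (by positivity) two_pos]
        nlinarith [hε]
      calc ‖x - ∑ i : Fin m, lp.single p (i : ℕ) (c i)‖
          ≤ ‖x - ∑ i : Fin m, lp.single p (i : ℕ) ((x : ℕ → ℂ) (i : ℕ))‖ +
            ‖(∑ i : Fin m, lp.single p (i : ℕ) ((x : ℕ → ℂ) (i : ℕ)) : lp (fun _ : ℕ => ℂ) p) -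
              ∑ i : Fin m, lp.single p (i : ℕ) (c i)‖ :=
            norm_sub_le_norm_sub_add_norm_sub _ _ _
        _ < ε / 2 + ε / 2 := add_lt_add_of_lt_of_le hm (key.trans hmδ.le)
        _ = ε := by ring
    · exact Set.mem_iUnion.2 ⟨m, ⟨c, fun i => hc1 i, rfl⟩⟩

lemma aux_dense_G (lam : ℂ) (hl : 1 < ‖lam‖) (d : lp (fun _ : ℕ => ℂ) p) {r : ℝ}
    (hr : 0 < r) :
    Dense (⋃ n : ℕ, (fun x => ((lam • B) ^ n) x) ⁻¹' Metric.ball d r) := by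
  rw [Metric.dense_iff]
  intro v ε hε
  obtain ⟨m₁, h₁⟩ := aux_approx p hp B hB v (half_pos hε)
  obtain ⟨m₂, h₂⟩ := aux_approx p hp B hB d (half_pos hr)
  set Cst : ℝ := ∑ i : Fin m₂, ‖(d : ℕ → ℂ) (i : ℕ)‖ with hCst
  have hCst0 : 0 ≤ Cst := Finset.sum_nonneg fun i _ => norm_nonneg _
  have hlam0 : lam ≠ 0 := by
    intro h; rw [h, norm_zero] at hl; linarith
  have hinv : ‖lam‖⁻¹ < 1 := inv_lt_one_of_one_lt₀ hl
  have htend : Tendsto (fun N : ℕ => ‖lam‖⁻¹ ^ N * Cst) atTop (𝓝 0) := by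
    simpa using (tendsto_pow_atTop_nhds_zero_of_lt_one (by positivity) hinv).mul_const Cst
  have hev : ∀ᶠ N in atTop, ‖lam‖⁻¹ ^ N * Cst < ε / 2 :=
    htend.eventually_lt_const (half_pos hε)
  obtain ⟨N, hN1, hN2⟩ := (hev.and (eventually_ge_atTop m₁)).exists
  set w : lp (fun _ : ℕ => ℂ) p :=
    (lam⁻¹) ^ N • ∑ i : Fin m₂, lp.single p ((i : ℕ) + N) ((d : ℕ → ℂ) (i : ℕ)) with hw
  set Pv : lp (fun _ : ℕ => ℂ) p := ∑ i : Fin m₁, lp.single p (i : ℕ) ((v : ℕ → ℂ) (i : ℕ))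
    with hPv
  have hwnorm : ‖w‖ < ε / 2 := by
    rw [hw, norm_smul, norm_pow, norm_inv]
    refine lt_of_le_of_lt ?_ hN1
    refine mul_le_mul_of_nonneg_left ?_ (by positivity)
    refine (norm_sum_le _ _).trans ?_
    rw [hCst]
    exact Finset.sum_le_sum fun i _ => le_of_eq (aux_norm_single p hp B hB _ _)
  refine ⟨Pv + w, ?_, ?_⟩
  · rw [Metric.mem_ball, dist_eq_norm]
    have : Pv + w - v = (Pv - v) + w := by abel
    rw [this]
    calc ‖(Pv - v) + w‖ ≤ ‖Pv - v‖ + ‖w‖ := norm_add_le _ _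
      _ < ε / 2 + ε / 2 := add_lt_add (by rw [norm_sub_rev]; exact h₁) hwnorm
      _ = ε := by ring
  · refine Set.mem_iUnion.2 ⟨N, ?_⟩
    have hpow : (lam • B) ^ N = lam ^ N • B ^ N := smul_pow lam B N
    have hBPv : (B ^ N) Pv = 0 := by
      rw [hPv, map_sum]
      refine Finset.sum_eq_zero fun i _ => ?_
      exact aux_Bpow_single_zero p hp B hB N (i : ℕ) (lt_of_lt_of_le i.2 hN2) _
    have hBw : (B ^ N) w =
        (lam⁻¹) ^ N • ∑ i : Fin m₂, lp.single p (i : ℕ) ((d : ℕ → ℂ) (i : ℕ)) := by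
      rw [hw, map_smul, map_sum]
      congr 1
      exact Finset.sum_congr rfl fun i _ => aux_Bpow_single p hp B hB N (i : ℕ) _
    show ((lam • B) ^ N) (Pv + w) ∈ Metric.ball d r
    rw [hpow, ContinuousLinearMap.smul_apply, map_add, hBPv, hBw, zero_add, smul_smul,
      ← mul_pow, mul_inv_cancel₀ hlam0, one_pow, one_smul]
    rw [Metric.mem_ball, dist_comm, dist_eq_norm]
    exact lt_of_lt_of_le h₂ (by linarith)

lemma aux_forward (lam : ℂ) (h : Hypercyclic (lam • B)) : 1 < ‖lam‖ := by
  by_contra hl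
  push_neg at hl
  obtain ⟨x, hx⟩ := h
  have hBn : ∀ (n : ℕ) (y : lp (fun _ : ℕ => ℂ) p), ‖(B ^ n) y‖ ≤ ‖y‖ := by
    intro n
    induction n with
    | zero => intro y; simp
    | succ n ih =>
        intro y
        rw [pow_succ, ContinuousLinearMap.mul_apply]
        exact (ih (B y)).trans (aux_norm_B_le p hp B hB y)
  have horb : ∀ n, ‖((lam • B) ^ n) x‖ ≤ ‖x‖ := by
    intro n
    rw [smul_pow, ContinuousLinearMap.smul_apply, norm_smul, norm_pow]
    calc ‖lam‖ ^ n * ‖(B ^ n) x‖ ≤ 1 * ‖x‖ :=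
          mul_le_mul (pow_le_one₀ (norm_nonneg _) hl) (hBn n x) (norm_nonneg _) zero_le_one
      _ = ‖x‖ := one_mul _
  set y : lp (fun _ : ℕ => ℂ) p := lp.single p 0 (((‖x‖ + 2 : ℝ) : ℂ)) with hydef
  have hy : ‖y‖ = ‖x‖ + 2 := by
    rw [hydef, aux_norm_single p hp B hB, Complex.norm_real]
    exact abs_of_nonneg (by positivity)
  obtain ⟨_, ⟨n, rfl⟩, hdist⟩ := Metric.mem_closure_iff.1 (hx y) 1 one_pos
  have hkey : ‖y‖ - ‖((lam • B) ^ n) x‖ ≤ dist y (((lam • B) ^ n) x) := by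
    rw [dist_eq_norm]; exact norm_sub_norm_le _ _
  rw [hy] at hkey
  linarith [horb n, hkey, hdist]

end Aux

/-- For `1 ≤ p < ∞` and `B` the backward shift on `ℓ^p(ℕ)` over `ℂ`, the operator
`λ • B` is hypercyclic if and only if `|λ| > 1`. -/
theorem smul_backwardShift_hypercyclic_iff (p : ℝ≥0∞) [Fact (1 ≤ p)] (hp : p ≠ ∞)
    (B : lp (fun _ : ℕ => ℂ) p →L[ℂ] lp (fun _ : ℕ => ℂ) p)
    (hB : ∀ (x : lp (fun _ : ℕ => ℂ) p) (n : ℕ), (B x) n = x (n + 1))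
    (lam : ℂ) :
    Hypercyclic (lam • B) ↔ 1 < ‖lam‖ := by
  constructor
  · exact aux_forward p hp B hB lam
  · intro hl
    obtain ⟨D, hDc, hDd⟩ := aux_countable_dense p hp B hB
    haveI : Countable ↥D := hDc.to_subtype
    set F : ↥D × ℕ → Set (lp (fun _ : ℕ => ℂ) p) := fun q =>
      ⋃ n : ℕ, (fun x => ((lam • B) ^ n) x) ⁻¹' Metric.ball (q.1 : lp (fun _ : ℕ => ℂ) p)
        (1 / (q.2 + 1)) with hF
    have hopen : ∀ q, IsOpen (F q) := fun q =>
      isOpen_iUnion fun n => Metric.isOpen_ball.preimage ((lam • B) ^ n).continuous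
    have hdense : ∀ q, Dense (F q) := fun q =>
      aux_dense_G p hp B hB lam hl _ (by positivity)
    have hD : Dense (⋂ q, F q) := dense_iInter_of_isOpen hopen hdense
    obtain ⟨x, hxmem⟩ := hD.nonempty
    refine ⟨x, ?_⟩
    rw [Metric.dense_iff]
    intro y ε hε
    obtain ⟨d, hd1, hd2⟩ := Metric.dense_iff.1 hDd y (ε / 2) (half_pos hε)
    obtain ⟨k, hk⟩ := exists_nat_one_div_lt (half_pos hε)
    have hx' := Set.mem_iInter.1 hxmem (⟨d, hd2⟩, k)
    rw [hF] at hx'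
    obtain ⟨n, hn⟩ := Set.mem_iUnion.1 hx'
    refine ⟨((lam • B) ^ n) x, ?_, ⟨n, rfl⟩⟩
    rw [Metric.mem_ball]
    have h1 : dist (((lam • B) ^ n) x) d < 1 / (k + 1) := hn
    have h2 : dist d y < ε / 2 := Metric.mem_ball.1 hd1
    calc dist (((lam • B) ^ n) x) y ≤ dist (((lam • B) ^ n) x) d + dist d y :=
          dist_triangle _ _ _
      _ < 1 / (k + 1) + ε / 2 := add_lt_add h1 h2
      _ < ε / 2 + ε / 2 := by linarith [hk]
      _ = ε := by ring
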